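/- Let G : ℤ^d × ℤ^d → (0,∞) be translation invariant, a-submultiplicative for some a > 0, with sup_{x∈ℤ^d} G(0,x) < ∞, and invariant under lattice symmetries (G(0, σx) = G(0,x) for every signed permutation σ of the coordinates). For z ∈ ℤ^d \ {0} let ν_z = −lim_{n→∞} (1/n)·log G(0, n·z) (this limit exists). Then for all x, y ∈ ℤ^d \ {0}: ν_x/‖x‖₂ ≤ d·ν_y/‖y‖₂, where ‖·‖₂ denotes the Euclidean norm. In particular, the maximal and minimal values of the normalized inverse correlation length over directions differ by at most a factor d. -/

import Mathlib

open Filter Topology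

/-- Euclidean norm of a point of `ℤ^d`. -/
noncomputable def enorm2 {d : ℕ} (x : Fin d → ℤ) : ℝ := Real.sqrt (∑ i, ((x i : ℝ)) ^ 2)

/-- Weak equivalence of directions for the inverse correlation
length: for a translation-invariant, submultiplicative, bounded, lattice
symmetric positive two-point function, `ν_x/‖x‖₂ ≤ d · ν_y/‖y‖₂` for all
nonzero `x, y ∈ ℤ^d`. -/
theorem statement4 {d : ℕ} (hd : 1 ≤ d)
    (G : (Fin d → ℤ) → (Fin d → ℤ) → ℝ) (a : ℝ) (ha : 0 < a)
    (hpos : ∀ x y : Fin d → ℤ, 0 < G x y)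
    (htrans : ∀ x y z : Fin d → ℤ, G (x + z) (y + z) = G x y)
    (hsub : ∀ x y z : Fin d → ℤ, a * (G x z * G z y) ≤ G x y)
    (hbdd : ∃ M : ℝ, ∀ x : Fin d → ℤ, G 0 x ≤ M)
    (hsymm : ∀ (π : Equiv.Perm (Fin d)) (ε : Fin d → ℤ), (∀ i, ε i = 1 ∨ ε i = -1) →
      ∀ x : Fin d → ℤ, G 0 (fun i => ε i * x (π i)) = G 0 x)
    (ν : (Fin d → ℤ) → ℝ)
    (hν : ∀ z : Fin d → ℤ, z ≠ 0 →
      Filter.Tendsto (fun n : ℕ => -(Real.log (G 0 ((n : ℤ) • z)) / (n : ℝ)))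
        Filter.atTop (nhds (ν z))) :
    ∀ x y : Fin d → ℤ, x ≠ 0 → y ≠ 0 →
      ν x / enorm2 x ≤ (d : ℝ) * (ν y / enorm2 y) := by
  obtain ⟨M, hM⟩ := hbdd
  have hMpos : 0 < M := lt_of_lt_of_le (hpos 0 0) (hM 0)
  -- ν is nonnegative
  have hnonneg : ∀ z : Fin d → ℤ, z ≠ 0 → 0 ≤ ν z := by
    intro z hz
    have h0 : Tendsto (fun n : ℕ => -Real.log M / (n : ℝ)) atTop (𝓝 0) :=
      tendsto_const_div_atTop_nhds_zero_nat _
    refine le_of_tendsto_of_tendsto h0 (hν z hz) ?_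
    filter_upwards [eventually_ge_atTop 1] with n hn
    have hn' : (0 : ℝ) ≤ (n : ℝ) := by positivity
    have hlog : Real.log (G 0 ((n : ℤ) • z)) ≤ Real.log M :=
      Real.log_le_log (hpos _ _) (hM _)
    rw [neg_div]
    apply neg_le_neg
    gcongr
  -- subadditivity of ν
  have hsubadd : ∀ x y : Fin d → ℤ, x ≠ 0 → y ≠ 0 → x + y ≠ 0 →
      ν (x + y) ≤ ν x + ν y := by
    intro x y hx hy hxy
    have hG : Tendsto (fun n : ℕ => -Real.log a / (n : ℝ) +
        (-(Real.log (G 0 ((n : ℤ) • x)) / (n : ℝ)) +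
          -(Real.log (G 0 ((n : ℤ) • y)) / (n : ℝ)))) atTop (𝓝 (0 + (ν x + ν y))) :=
      (tendsto_const_div_atTop_nhds_zero_nat _).add ((hν x hx).add (hν y hy))
    rw [zero_add] at hG
    refine le_of_tendsto_of_tendsto (hν (x + y) hxy) hG ?_
    filter_upwards [eventually_ge_atTop 1] with n hn
    have hn' : (0 : ℝ) < (n : ℝ) := by exact_mod_cast hn
    have key : a * (G 0 ((n : ℤ) • x) * G 0 ((n : ℤ) • y)) ≤ G 0 ((n : ℤ) • (x + y)) := by
      have h1 := hsub 0 ((n : ℤ) • (x + y)) ((n : ℤ) • x)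
      have h2 := htrans 0 ((n : ℤ) • y) ((n : ℤ) • x)
      rw [zero_add] at h2
      have h3 : (n : ℤ) • y + (n : ℤ) • x = (n : ℤ) • (x + y) := by
        rw [smul_add, add_comm]
      rw [h3] at h2
      rw [h2] at h1
      exact h1
    have hlog : Real.log a + (Real.log (G 0 ((n : ℤ) • x)) + Real.log (G 0 ((n : ℤ) • y)))
        ≤ Real.log (G 0 ((n : ℤ) • (x + y))) := by
      have hprod : (0 : ℝ) < a * (G 0 ((n : ℤ) • x) * G 0 ((n : ℤ) • y)) :=
        mul_pos ha (mul_pos (hpos _ _) (hpos _ _))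
      have := Real.log_le_log hprod key
      rwa [Real.log_mul (ne_of_gt ha) (ne_of_gt (mul_pos (hpos _ _) (hpos _ _))),
        Real.log_mul (ne_of_gt (hpos _ _)) (ne_of_gt (hpos _ _))] at this
    have heq : -Real.log a / (n : ℝ) + (-(Real.log (G 0 ((n : ℤ) • x)) / (n : ℝ)) +
        -(Real.log (G 0 ((n : ℤ) • y)) / (n : ℝ))) =
        -((Real.log a + (Real.log (G 0 ((n : ℤ) • x)) + Real.log (G 0 ((n : ℤ) • y)))) / (n : ℝ)) := by
      ring
    rw [heq]
    apply neg_le_neg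
    gcongr
  -- homogeneity of ν along rays
  have hhom : ∀ (z : Fin d → ℤ) (k : ℕ), z ≠ 0 → k ≠ 0 →
      ν ((k : ℤ) • z) = (k : ℝ) * ν z := by
    intro z k hz hk
    have hkz : (k : ℤ) • z ≠ 0 := smul_ne_zero (by exact_mod_cast hk) hz
    have hcomp : Tendsto (fun n : ℕ =>
        -(Real.log (G 0 (((n * k : ℕ) : ℤ) • z)) / ((n * k : ℕ) : ℝ))) atTop (𝓝 (ν z)) := by
      refine (hν z hz).comp ?_
      exact tendsto_atTop_atTop.mpr fun b =>
        ⟨b, fun n hn => le_trans hn (Nat.le_mul_of_pos_right n (Nat.pos_of_ne_zero hk))⟩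
    have hmul := hcomp.const_mul (k : ℝ)
    refine tendsto_nhds_unique (hν _ hkz) (hmul.congr' ?_)
    filter_upwards [eventually_ge_atTop 1] with n hn
    have hn' : (0 : ℝ) < (n : ℝ) := by exact_mod_cast hn
    have hk' : (0 : ℝ) < (k : ℝ) := by exact_mod_cast Nat.pos_of_ne_zero hk
    have harg : (((n * k : ℕ) : ℤ)) • z = (n : ℤ) • ((k : ℤ) • z) := by
      rw [smul_smul]
      congr 1
    rw [harg]
    push_cast
    field_simp
  -- invariance of ν under signed permutations
  have hsymmν : ∀ (π : Equiv.Perm (Fin d)) (ε : Fin d → ℤ), (∀ i, ε i = 1 ∨ ε i = -1) →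
      ∀ z : Fin d → ℤ, z ≠ 0 → ν (fun i => ε i * z (π i)) = ν z := by
    intro π ε hε z hz
    set w : Fin d → ℤ := fun i => ε i * z (π i) with hw
    have hwne : w ≠ 0 := by
      intro h
      apply hz
      funext j
      have hj := congrFun h (π.symm j)
      simp only [hw, Pi.zero_apply, Equiv.apply_symm_apply] at hj
      rcases hε (π.symm j) with h1 | h1 <;> rw [h1] at hj <;> simpa using hj
    have hseq : ∀ n : ℕ, G 0 ((n : ℤ) • w) = G 0 ((n : ℤ) • z) := by
      intro n
      have harg : (n : ℤ) • w = fun i => ε i * (((n : ℤ) • z) (π i)) := by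
        funext i
        simp only [hw, Pi.smul_apply, smul_eq_mul]
        ring
      rw [harg, hsymm π ε hε]
    refine tendsto_nhds_unique (hν w hwne) ((hν z hz).congr fun n => ?_)
    rw [hseq n]
  -- the basis direction
  set i0 : Fin d := ⟨0, hd⟩ with hi0
  have hesingle_ne : ∀ i : Fin d, (Pi.single i 1 : Fin d → ℤ) ≠ 0 := by
    intro i h
    have := congrFun h i
    simp at this
  set c : ℝ := ν (Pi.single i0 1) with hc
  have hc0 : 0 ≤ c := hnonneg _ (hesingle_ne i0)
  -- all basis directions have the same ν
  have hbasis : ∀ i : Fin d, ν (Pi.single i 1) = c := by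
    intro i
    have h := hsymmν (Equiv.swap i i0) (fun _ => 1) (fun _ => Or.inl rfl)
      (Pi.single i0 1) (hesingle_ne i0)
    have harg : (fun j => (1 : ℤ) * (Pi.single i0 1 : Fin d → ℤ) (Equiv.swap i i0 j)) =
        (Pi.single i 1 : Fin d → ℤ) := by
      funext j
      rcases eq_or_ne j i with rfl | hj
      · rw [one_mul, Equiv.swap_apply_left, Pi.single_eq_same, Pi.single_eq_same]
      · have hne : Equiv.swap i i0 j ≠ i0 := by
          intro hcontra
          apply hj
          have := (Equiv.swap i i0).injective (hcontra.trans (Equiv.swap_apply_left i i0).symm)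
          exact this
        simp [Pi.single_apply, hne, hj]
    rw [harg] at h
    exact h
  -- ν of a multiple of a basis vector
  have hscale : ∀ (i : Fin d) (k : ℤ), k ≠ 0 →
      ν (k • (Pi.single i 1 : Fin d → ℤ)) = ((|k| : ℤ) : ℝ) * c := by
    intro i k hk
    have hneg : ∀ v : Fin d → ℤ, v ≠ 0 → ν (-v) = ν v := by
      intro v hv
      have h := hsymmν (Equiv.refl _) (fun _ => -1) (fun _ => Or.inr rfl) v hv
      have harg : (fun i => (-1 : ℤ) * v (Equiv.refl (Fin d) i)) = -v := by
        funext i; simp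
      rwa [harg] at h
    rcases hk.lt_or_gt with hneg' | hpos'
    · have htn : ((((-k).toNat : ℕ) : ℤ)) = -k := Int.toNat_of_nonneg (by omega)
      have h1 : k • (Pi.single i 1 : Fin d → ℤ) =
          -((((-k).toNat : ℕ) : ℤ) • (Pi.single i 1 : Fin d → ℤ)) := by
        rw [htn, neg_smul, neg_neg]
      rw [h1, hneg _ (smul_ne_zero (by omega) (hesingle_ne i)),
        hhom _ _ (hesingle_ne i) (by omega), hbasis i]
      congr 1
      have habs : (((-k).toNat : ℕ) : ℤ) = |k| := htn.trans (abs_of_neg hneg').symm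
      exact_mod_cast congrArg (fun t : ℤ => (t : ℝ)) habs
    · have htn : (((k.toNat : ℕ) : ℤ)) = k := Int.toNat_of_nonneg (by omega)
      have h1 : k • (Pi.single i 1 : Fin d → ℤ) =
          ((k.toNat : ℕ) : ℤ) • (Pi.single i 1 : Fin d → ℤ) := by rw [htn]
      rw [h1, hhom _ _ (hesingle_ne i) (by omega), hbasis i]
      congr 1
      have habs : ((k.toNat : ℕ) : ℤ) = |k| := htn.trans (abs_of_pos hpos').symm
      exact_mod_cast congrArg (fun t : ℤ => (t : ℝ)) habs
  -- upper bound: ν x ≤ ‖x‖₁ * c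
  have hupper : ∀ x : Fin d → ℤ, x ≠ 0 → ν x ≤ (∑ i, ((|x i| : ℤ) : ℝ)) * c := by
    suffices h : ∀ s : Finset (Fin d), ∀ x : Fin d → ℤ, x ≠ 0 →
        (∀ j, x j ≠ 0 → j ∈ s) → ν x ≤ (∑ i ∈ s, ((|x i| : ℤ) : ℝ)) * c by
      intro x hx
      exact h Finset.univ x hx fun j _ => Finset.mem_univ j
    intro s
    induction s using Finset.induction_on with
    | empty =>
      intro x hx hsupp
      exfalso
      apply hx
      funext j
      by_contra h
      exact Finset.notMem_empty j (hsupp j h)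
    | @insert i s hi ih =>
      intro x hx hsupp
      by_cases hxi : x i = 0
      · have hsupp' : ∀ j, x j ≠ 0 → j ∈ s := fun j hj => by
          rcases Finset.mem_insert.mp (hsupp j hj) with rfl | h
          · exact absurd hxi hj
          · exact h
        refine (ih x hx hsupp').trans (le_of_eq ?_)
        rw [Finset.sum_insert hi, hxi]
        simp
      · set x' : Fin d → ℤ := Function.update x i 0 with hx'def
        have hxdecomp : x = x' + (x i) • (Pi.single i 1 : Fin d → ℤ) := by
          funext j
          rcases eq_or_ne j i with rfl | hj
          · simp [hx'def]
          · simp [hx'def, Function.update_of_ne hj, Pi.single_apply, hj]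
        have hsupp' : ∀ j, x' j ≠ 0 → j ∈ s := by
          intro j hj
          rcases eq_or_ne j i with rfl | hji
          · simp [hx'def] at hj
          · have hxj : x j ≠ 0 := by
              simpa [hx'def, Function.update_of_ne hji] using hj
            rcases Finset.mem_insert.mp (hsupp j hxj) with h | h
            · exact absurd h hji
            · exact h
        have hsum : ∑ j ∈ s, ((|x' j| : ℤ) : ℝ) = ∑ j ∈ s, ((|x j| : ℤ) : ℝ) := by
          refine Finset.sum_congr rfl fun j hj => ?_
          have hji : j ≠ i := fun h => hi (h ▸ hj)
          rw [hx'def, Function.update_of_ne hji]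
        have hsingle : ν ((x i) • (Pi.single i 1 : Fin d → ℤ)) = ((|x i| : ℤ) : ℝ) * c :=
          hscale i (x i) hxi
        by_cases hx'0 : x' = 0
        · have hxe : x = (x i) • (Pi.single i 1 : Fin d → ℤ) := by
            conv_lhs => rw [hxdecomp, hx'0]
            rw [zero_add]
          have h1 : ν x = ((|x i| : ℤ) : ℝ) * c := (congrArg ν hxe).trans hsingle
          rw [h1, Finset.sum_insert hi]
          have hsum0 : (0 : ℝ) ≤ ∑ j ∈ s, ((|x j| : ℤ) : ℝ) :=
            Finset.sum_nonneg fun j _ => by positivity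
          nlinarith [abs_nonneg (x i), hc0]
        · have hxi_ne : (x i) • (Pi.single i 1 : Fin d → ℤ) ≠ 0 :=
            smul_ne_zero hxi (hesingle_ne i)
          have hadd := hsubadd x' ((x i) • Pi.single i 1) hx'0 hxi_ne
            (by rw [← hxdecomp]; exact hx)
          rw [← hxdecomp] at hadd
          calc ν x ≤ ν x' + ν ((x i) • (Pi.single i 1 : Fin d → ℤ)) := hadd
            _ ≤ (∑ j ∈ s, ((|x' j| : ℤ) : ℝ)) * c + ((|x i| : ℤ) : ℝ) * c :=
                add_le_add (ih x' hx'0 hsupp') (le_of_eq hsingle)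
            _ = (∑ j ∈ insert i s, ((|x j| : ℤ) : ℝ)) * c := by
                rw [hsum, Finset.sum_insert hi]; ring
  -- lower bound: ν y ≥ |y i| * c for every i
  have hlower : ∀ y : Fin d → ℤ, y ≠ 0 → ∀ i, ((|y i| : ℤ) : ℝ) * c ≤ ν y := by
    intro y hy i
    by_cases hyi : y i = 0
    · rw [hyi]
      simpa using hnonneg y hy
    · set ε : Fin d → ℤ := fun j => if j = i then 1 else -1 with hεdef
      have hεpm : ∀ j, ε j = 1 ∨ ε j = -1 := fun j => by
        by_cases h : j = i <;> simp [hεdef, h]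
      have hνw := hsymmν (Equiv.refl _) ε hεpm y hy
      set w : Fin d → ℤ := fun j => ε j * y (Equiv.refl (Fin d) j) with hwdef
      have hw_ne : w ≠ 0 := by
        intro h
        apply hyi
        have := congrFun h i
        simpa [hwdef, hεdef] using this
      have hyw : y + w = (2 * y i) • (Pi.single i 1 : Fin d → ℤ) := by
        funext j
        simp only [hwdef, hεdef, Pi.add_apply, Pi.smul_apply, smul_eq_mul,
          Equiv.refl_apply, Pi.single_apply]
        split_ifs with h
        · subst h; ring
        · ring
      have hne2 : y + w ≠ 0 := by
        rw [hyw]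
        exact smul_ne_zero (by omega) (hesingle_ne i)
      have h1 := hsubadd y w hy hw_ne hne2
      rw [hyw, hscale i (2 * y i) (by omega), hνw] at h1
      have habs : |2 * y i| = 2 * |y i| := by
        rw [abs_mul]; norm_num
      rw [habs] at h1
      push_cast at h1 ⊢
      linarith
  -- final argument
  intro x y hx hy
  obtain ⟨i1, -, hi1⟩ := Finset.exists_max_image Finset.univ (fun i => |y i|)
    ⟨i0, Finset.mem_univ i0⟩
  have hyi1 : y i1 ≠ 0 := by
    intro h
    apply hy
    funext j
    have hj := hi1 j (Finset.mem_univ j)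
    rw [h] at hj
    simp only [abs_zero] at hj
    have := abs_nonneg (y j)
    simpa [Pi.zero_apply] using abs_eq_zero.mp (le_antisymm hj this)
  set m : ℝ := ((|y i1| : ℤ) : ℝ) with hm_def
  have hm : 0 < m := by
    rw [hm_def]
    have : 0 < |y i1| := abs_pos.mpr hyi1
    exact_mod_cast this
  -- positivity of norms
  have hQx_pos : 0 < ∑ i, ((x i : ℝ)) ^ 2 := by
    obtain ⟨j, hj⟩ : ∃ j, x j ≠ 0 := by
      by_contra h
      push_neg at h
      exact hx (funext h)
    have hj' : ((x j : ℝ)) ≠ 0 := Int.cast_ne_zero.mpr hj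
    exact Finset.sum_pos' (fun i _ => sq_nonneg _) ⟨j, Finset.mem_univ j, by positivity⟩
  have hQy_pos : 0 < ∑ i, ((y i : ℝ)) ^ 2 := by
    have hj' : ((y i1 : ℝ)) ≠ 0 := Int.cast_ne_zero.mpr hyi1
    exact Finset.sum_pos' (fun i _ => sq_nonneg _) ⟨i1, Finset.mem_univ i1, by positivity⟩
  have hnx : 0 < enorm2 x := Real.sqrt_pos.mpr hQx_pos
  have hny : 0 < enorm2 y := Real.sqrt_pos.mpr hQy_pos
  -- Cauchy-Schwarz: ‖x‖₁ ≤ √d ‖x‖₂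
  have hCS : (∑ i, ((|x i| : ℤ) : ℝ)) ≤ Real.sqrt d * enorm2 x := by
    have h2 : (∑ i, ((|x i| : ℤ) : ℝ)) ^ 2 ≤ (d : ℝ) * ∑ i, ((x i : ℝ)) ^ 2 := by
      have := Finset.sum_mul_sq_le_sq_mul_sq Finset.univ (fun _ => (1 : ℝ))
        (fun i => ((|x i| : ℤ) : ℝ))
      simp only [one_mul, one_pow] at this
      have hsq : ∑ i, ((|x i| : ℤ) : ℝ) ^ 2 = ∑ i, ((x i : ℝ)) ^ 2 := by
        refine Finset.sum_congr rfl fun i _ => ?_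
        push_cast
        rw [sq_abs]
      rw [hsq] at this
      simpa [Finset.sum_const, Finset.card_univ, nsmul_eq_mul] using this
    calc (∑ i, ((|x i| : ℤ) : ℝ)) = Real.sqrt ((∑ i, ((|x i| : ℤ) : ℝ)) ^ 2) :=
          (Real.sqrt_sq (Finset.sum_nonneg fun i _ => by positivity)).symm
      _ ≤ Real.sqrt ((d : ℝ) * ∑ i, ((x i : ℝ)) ^ 2) := Real.sqrt_le_sqrt h2
      _ = Real.sqrt d * enorm2 x := by
          rw [Real.sqrt_mul (by positivity)]
          rfl
  -- ‖y‖₂ ≤ √d ‖y‖∞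
  have hny_le : enorm2 y ≤ Real.sqrt d * m := by
    have hQy : ∑ i, ((y i : ℝ)) ^ 2 ≤ (d : ℝ) * m ^ 2 := by
      calc ∑ i, ((y i : ℝ)) ^ 2 ≤ ∑ _i : Fin d, m ^ 2 := by
            refine Finset.sum_le_sum fun i _ => ?_
            have h' : ((|y i| : ℤ) : ℝ) ≤ m := by
              rw [hm_def]
              exact_mod_cast hi1 i (Finset.mem_univ i)
            have h0 : (0 : ℝ) ≤ ((|y i| : ℤ) : ℝ) := by positivity
            have : ((y i : ℝ)) ^ 2 = ((|y i| : ℤ) : ℝ) ^ 2 := by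
              push_cast
              rw [sq_abs]
            rw [this]
            nlinarith
        _ = (d : ℝ) * m ^ 2 := by
            simp [Finset.sum_const, Finset.card_univ, nsmul_eq_mul]
    calc enorm2 y = Real.sqrt (∑ i, ((y i : ℝ)) ^ 2) := rfl
      _ ≤ Real.sqrt ((d : ℝ) * m ^ 2) := Real.sqrt_le_sqrt hQy
      _ = Real.sqrt d * m := by
          rw [Real.sqrt_mul (by positivity), Real.sqrt_sq hm.le]
  have hνx := hupper x hx
  have hνy := hlower y hy i1
  have hsd : Real.sqrt d * Real.sqrt d = (d : ℝ) := Real.mul_self_sqrt (by positivity)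
  rw [← mul_div_assoc, div_le_div_iff₀ hnx hny]
  have hA : ν x ≤ Real.sqrt d * enorm2 x * c :=
    hνx.trans (mul_le_mul_of_nonneg_right hCS hc0)
  have hB : enorm2 y * c ≤ Real.sqrt d * m * c := mul_le_mul_of_nonneg_right hny_le hc0
  calc ν x * enorm2 y ≤ (Real.sqrt d * enorm2 x * c) * enorm2 y :=
        mul_le_mul_of_nonneg_right hA hny.le
    _ = (Real.sqrt d * enorm2 x) * (enorm2 y * c) := by ring
    _ ≤ (Real.sqrt d * enorm2 x) * (Real.sqrt d * m * c) :=
        mul_le_mul_of_nonneg_left hB (mul_nonneg (Real.sqrt_nonneg _) hnx.le)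
    _ = (Real.sqrt d * Real.sqrt d) * (m * c) * enorm2 x := by ring
    _ = (d : ℝ) * (m * c) * enorm2 x := by rw [hsd]
    _ ≤ (d : ℝ) * ν y * enorm2 x := by
        have : (d : ℝ) * (m * c) ≤ (d : ℝ) * ν y :=
          mul_le_mul_of_nonneg_left hνy (by positivity)
        exact mul_le_mul_of_nonneg_right this hnx.le
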